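/- The isomorphism class of the Heisenberg representation is fixed by the symplectic group: if (π, H) is an irreducible complex representation of the Heisenberg group H(V,ω) with central character ψ, then for every g ∈ Sp(V,ω) the representation π ∘ g (where g acts on H(V,ω) by g·(v,z) = (gv,z)) is isomorphic to π. -/

import Mathlib

/-!
The isomorphism class of the Heisenberg representation is fixed by the symplectic
group: for an irreducible complex representation `(π, H)` of `H(V,ω)` with central
character `ψ` and `g ∈ Sp(V,ω)`, the representation `π ∘ g` is isomorphic to `π`.
-/

noncomputable section
set_option linter.unusedSectionVars false

namespace KRSup

variable (F V : Type) [Field F] [Fintype F] [AddCommGroup V] [Module F V]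

/-- Heisenberg group multiplication on `H = V × F`:
`(v,z)·(v',z') = (v+v', z+z'+½ω(v,v'))`. -/
def hMul (ω : LinearMap.BilinForm F V) (h h' : V × F) : V × F :=
  (h.1 + h'.1, h.2 + h'.2 + (2 : F)⁻¹ * ω h.1 h'.1)

/-- An irreducible finite-dimensional complex representation of the Heisenberg group
`H(V,ω)` with central character `ψ`. -/
structure HeisenbergRep (ω : LinearMap.BilinForm F V) (ψ : AddChar F ℂ) where
  /-- the underlying complex vector space -/
  carrier : Type
  [acg : AddCommGroup carrier]
  [mod : Module ℂ carrier]
  [fd : FiniteDimensional ℂ carrier]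
  /-- the action of the Heisenberg group -/
  π : V × F → (carrier →ₗ[ℂ] carrier)
  π_mul : ∀ h h' : V × F, π (hMul F V ω h h') = (π h).comp (π h')
  π_one : π ((0 : V), (0 : F)) = LinearMap.id
  nontriv : ∃ w : carrier, w ≠ 0
  /-- the restriction to the center `Z(H) = {(0,z)}` acts by the character `ψ` -/
  central : ∀ z : F, π ((0 : V), z) = ψ z • LinearMap.id
  /-- irreducibility: no nontrivial invariant subspaces -/
  irred : ∀ U : Submodule ℂ carrier, (∀ h : V × F, ∀ w ∈ U, π h w ∈ U) → U = ⊥ ∨ U = ⊤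

attribute [instance] HeisenbergRep.acg HeisenbergRep.mod HeisenbergRep.fd

/-- The symplectic group `Sp(V,ω)` of linear automorphisms preserving `ω`. -/
def Symp (ω : LinearMap.BilinForm F V) : Subgroup (V ≃ₗ[F] V) where
  carrier := {g | ∀ u v : V, ω (g u) (g v) = ω u v}
  mul_mem' := by
    intro g h hg hh u v
    simpa using (hg (h u) (h v)).trans (hh u v)
  one_mem' := by intro u v; rfl
  inv_mem' := by
    intro g hg u v
    conv_rhs => rw [← g.apply_symm_apply u, ← g.apply_symm_apply v, hg]
    rfl


section Aux

/-- The Heisenberg group structure on `V × F`. -/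
def heisGroup (ω : LinearMap.BilinForm F V) : Group (V × F) where
  mul := hMul F V ω
  one := (0, 0)
  inv h := (-h.1, -h.2 + (2 : F)⁻¹ * ω h.1 h.1)
  mul_assoc a b c := by
    show hMul F V ω (hMul F V ω a b) c = hMul F V ω a (hMul F V ω b c)
    unfold hMul
    ext
    · exact add_assoc _ _ _
    · simp only [map_add, LinearMap.add_apply]
      ring
  one_mul a := by
    show hMul F V ω (0, 0) a = a
    unfold hMul; simp
  mul_one a := by
    show hMul F V ω a (0, 0) = a
    unfold hMul; simp
  inv_mul_cancel a := by
    show hMul F V ω _ a = (0, 0)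
    unfold hMul
    ext
    · exact neg_add_cancel _
    · simp only [map_neg, LinearMap.neg_apply]
      ring

open Module Representation in
/-- The first half of `FDRep.char_orthonormal`: the averaged character pairing of two
(not necessarily irreducible) representations equals the dimension of the space of
equivariant maps. -/
theorem my_orth {G : Type} [Group G] [Fintype G] [Invertible (Fintype.card G : ℂ)]
    (V W : FDRep ℂ G) :
    ⅟(Fintype.card G : ℂ) • ∑ g : G, V.character g * W.character g⁻¹ =
      finrank ℂ (Representation.invariants (Representation.linHom W.ρ V.ρ)) := by
  classical
  haveI : Invertible (Nat.card G : ℂ) := by rwa [← Fintype.card_eq_nat_card]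
  have h := FDRep.average_char_eq_finrank_invariants (k := ℂ)
    (FDRep.of (Representation.linHom W.ρ V.ρ))
  simp only [FDRep.char_linHom] at h
  rw [invOf_eq_inv, smul_eq_mul, Fintype.card_eq_nat_card]
  convert h using 2
  · apply Finset.sum_congr rfl; intro g _; ring
  · rfl
  · rfl

end Aux

/-- The isomorphism class of the Heisenberg representation is fixed by `Sp(V,ω)`:
for every `g ∈ Sp(V,ω)`, the representation `π ∘ g` (where `g·(v,z) = (gv,z)`) is
isomorphic to `π`. -/
theorem heisenberg_rep_class_fixed_by_symplectic_group
    (n : ℕ) [FiniteDimensional F V] (hdim : Module.finrank F V = 2 * n)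
    (hq : Odd (Fintype.card F))
    (ω : LinearMap.BilinForm F V)
    (halt : ∀ v : V, ω v v = 0)
    (hnd : ∀ v : V, (∀ u : V, ω v u = 0) → v = 0)
    (ψ : AddChar F ℂ) (hψ : ψ ≠ 1)
    (P : HeisenbergRep F V ω ψ)
    (g : ↥(Symp F V ω)) :
    ∃ e : P.carrier ≃ₗ[ℂ] P.carrier,
      ∀ (v : V) (z : F) (w : P.carrier),
        e (P.π ((g : V ≃ₗ[F] V) v, z) w) = P.π (v, z) (e w) := by
  classical
  obtain ⟨g, hg⟩ := g
  -- basic facts about `F`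
  have hchar : ringChar F ≠ 2 := by
    intro h
    have h0 := FiniteField.even_card_of_char_two h
    have h1 := Nat.odd_iff.1 hq
    omega
  have two_ne : (2 : F) ≠ 0 := by
    intro h2
    have hdvd : ringChar F ∣ 2 := ringChar.dvd (by exact_mod_cast h2)
    rcases (Nat.dvd_prime Nat.prime_two).1 hdvd with h | h
    · exact CharP.char_ne_one F (ringChar F) h
    · exact hchar h
  have skew : ∀ u v : V, ω v u = -ω u v := by
    intro u v
    have h := halt (u + v)
    simp only [map_add, LinearMap.add_apply, halt] at h
    linear_combination h
  -- the Heisenberg group structure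
  letI : Group (V × F) := heisGroup F V ω
  have hmul_def : ∀ a b : V × F, a * b = (a.1 + b.1, a.2 + b.2 + (2 : F)⁻¹ * ω a.1 b.1) :=
    fun _ _ => rfl
  have hinv_def : ∀ a : V × F, a⁻¹ = (-a.1, -a.2 + (2 : F)⁻¹ * ω a.1 a.1) := fun _ => rfl
  have hone_def : (1 : V × F) = ((0 : V), (0 : F)) := rfl
  haveI : Finite V := Module.finite_of_finite F
  haveI : Fintype V := Fintype.ofFinite V
  -- the representation as a monoid hom
  let ρ : Representation ℂ (V × F) P.carrier :=
    { toFun := P.π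
      map_one' := P.π_one
      map_mul' := fun a b => P.π_mul a b }
  have hρ : ∀ h : V × F, ρ h = P.π h := fun _ => rfl
  -- the symplectic twist as a group hom
  let φ : (V × F) →* (V × F) :=
    { toFun := fun h => (g h.1, h.2)
      map_one' := by rw [hone_def]; simp
      map_mul' := by
        intro a b
        rw [hmul_def, hmul_def]
        simp only [map_add]
        rw [hg a.1 b.1]
      }
  let G : Type := V × F
  haveI : Fintype G := inferInstanceAs (Fintype (V × F))
  haveI : Invertible ((Fintype.card G : ℂ)) :=
    invertibleOfNonzero (by exact_mod_cast Fintype.card_ne_zero)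
  let Y : FDRep ℂ G := FDRep.of ρ
  let X : FDRep ℂ G := FDRep.of (ρ.comp φ)
  have hYρ : ∀ h : V × F, Y.ρ h = P.π h := fun _ => rfl
  have hXρ : ∀ h : V × F, X.ρ h = P.π (g h.1, h.2) := fun _ => rfl
  have hYchar : ∀ h : V × F, Y.character h = LinearMap.trace ℂ P.carrier (P.π h) :=
    fun _ => rfl
  have hXchar : ∀ h : V × F, X.character h = LinearMap.trace ℂ P.carrier (P.π (g h.1, h.2)) :=
    fun _ => rfl
  -- the trace of `π (v, z)` vanishes for `v ≠ 0`
  have htr0 : ∀ (v : V) (z : F), v ≠ 0 →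
      LinearMap.trace ℂ P.carrier (P.π (v, z)) = 0 := by
    intro v z hv
    -- conjugation shifts the central coordinate
    have hconj : ∀ (u : V) (c : F), ω u v = c →
        LinearMap.trace ℂ P.carrier (P.π (v, z + c)) =
          LinearMap.trace ℂ P.carrier (P.π (v, z)) := by
      intro u c hc
      have hprod : ((u, (0 : F)) * (v, z)) * (u, (0 : F))⁻¹ = ((v, z + c) : V × F) := by
        rw [hinv_def, hmul_def, hmul_def]
        ext
        · show u + v + -u = v
          abel
        · show 0 + z + (2 : F)⁻¹ * ω u v + (-0 + (2 : F)⁻¹ * ω u u) +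
            (2 : F)⁻¹ * ω (u + v) (-u) = z + c
          rw [halt u]
          simp only [map_add, map_neg, LinearMap.add_apply, LinearMap.neg_apply, halt u,
            skew u v, ← hc]
          field_simp
          ring
      calc LinearMap.trace ℂ P.carrier (P.π (v, z + c))
          = LinearMap.trace ℂ P.carrier (ρ (((u, (0:F)) * (v, z)) * (u, (0:F))⁻¹)) := by
            rw [hprod, hρ]
        _ = LinearMap.trace ℂ P.carrier (ρ ((u, (0:F))) * ρ ((v, z) * (u, (0:F))⁻¹)) := by
            rw [← map_mul, mul_assoc]
        _ = LinearMap.trace ℂ P.carrier (ρ ((v, z) * (u, (0:F))⁻¹) * ρ ((u, (0:F)))) :=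
            LinearMap.trace_mul_comm ℂ _ _
        _ = LinearMap.trace ℂ P.carrier (ρ (v, z)) := by
            rw [← map_mul, mul_assoc, inv_mul_cancel, mul_one]
        _ = LinearMap.trace ℂ P.carrier (P.π (v, z)) := by rw [hρ]
    -- the central coordinate scales the trace by `ψ`
    have hcent : ∀ c : F,
        LinearMap.trace ℂ P.carrier (P.π (v, z + c)) =
          ψ c * LinearMap.trace ℂ P.carrier (P.π (v, z)) := by
      intro c
      have hprod : ((v, z) * ((0 : V), c)) = ((v, z + c) : V × F) := by
        rw [hmul_def]
        ext
        · show v + 0 = v; simp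
        · show z + c + (2 : F)⁻¹ * ω v 0 = z + c; simp
      rw [← hprod, ← hρ, map_mul, hρ, hρ, P.central c]
      rw [show (LinearMap.id : P.carrier →ₗ[ℂ] P.carrier) = 1 from rfl, mul_smul_comm,
        mul_one, map_smul, smul_eq_mul]
    -- choose `u` with `ω u v` arbitrary
    obtain ⟨c, hcne⟩ := AddChar.ne_one_iff.1 hψ
    obtain ⟨u₀, hu₀⟩ : ∃ u : V, ω v u ≠ 0 := by
      by_contra hcon
      push_neg at hcon
      exact hv (hnd v hcon)
    have hukey : ∀ c : F, ∃ u : V, ω u v = c := by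
      intro c
      refine ⟨(-c / ω v u₀) • u₀, ?_⟩
      have hne : ω u₀ v = -ω v u₀ := skew v u₀
      rw [map_smul, LinearMap.smul_apply, hne, smul_eq_mul]
      field_simp
    obtain ⟨u, hu⟩ := hukey c
    have h1 := hconj u c hu
    have h2 := hcent c
    rw [h1] at h2
    have := sub_eq_zero.2 h2.symm
    rw [← sub_one_mul] at this
    rcases mul_eq_zero.1 this with h | h
    · exact absurd (sub_eq_zero.1 h) hcne
    · exact h
  -- the two character pairings agree
  have hsum : ∑ h : G, Y.character h * X.character h⁻¹ =
      ∑ h : G, Y.character h * Y.character h⁻¹ := by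
    apply Finset.sum_congr rfl
    intro h _
    obtain ⟨v, z⟩ := h
    by_cases hv : v = 0
    · subst hv
      congr 1
      rw [hinv_def, hXchar, hYchar]
      simp
    · rw [hYchar, htr0 v z hv, zero_mul, zero_mul]
  -- dimensions of the intertwiner spaces agree
  have horthX := my_orth Y X
  have horthY := my_orth Y Y
  rw [hsum, horthY] at horthX
  have hdimeq : Module.finrank ℂ (Representation.invariants (Representation.linHom X.ρ Y.ρ)) =
      Module.finrank ℂ (Representation.invariants (Representation.linHom Y.ρ Y.ρ)) :=
    (Nat.cast_injective horthX).symm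
  -- the self-intertwiner space is nontrivial
  obtain ⟨w₀, hw₀⟩ := P.nontriv
  have hid_mem : (LinearMap.id : P.carrier →ₗ[ℂ] P.carrier) ∈
      Representation.invariants (Representation.linHom Y.ρ Y.ρ) := by
    refine (Representation.mem_invariants _ _).2 ?_
    intro h
    ext w
    show Y.ρ h (Y.ρ h⁻¹ w) = w
    rw [← Module.End.mul_apply, ← map_mul, mul_inv_cancel, map_one, Module.End.one_apply]
  have hYYpos : Representation.invariants (Representation.linHom Y.ρ Y.ρ) ≠ ⊥ := by
    intro hb
    rw [hb, Submodule.mem_bot] at hid_mem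
    exact hw₀ (by rw [← LinearMap.id_apply (R := ℂ) w₀, hid_mem]; rfl)
  have hXYne : Representation.invariants (Representation.linHom X.ρ Y.ρ) ≠ ⊥ := by
    intro hb
    rw [hb, finrank_bot] at hdimeq
    exact hYYpos (Submodule.finrank_eq_zero.1 hdimeq.symm)
  obtain ⟨T, hTmem, hTne⟩ := (Submodule.ne_bot_iff _).1 hXYne
  -- `T` intertwines `π ∘ g` and `π`
  have key : ∀ (v : V) (z : F) (w : P.carrier),
      T (P.π (g v, z) w) = P.π (v, z) (T w) := by
    intro v z w
    have h1 := (Representation.mem_invariants _ T).1 hTmem ((v, z) : V × F)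
    have h3 : Y.ρ ((v, z) : V × F)
          (T (X.ρ (((v, z) : V × F)⁻¹) (X.ρ ((v, z) : V × F) w))) =
        T (X.ρ ((v, z) : V × F) w) :=
      congrArg (· (X.ρ ((v, z) : V × F) w)) h1
    have h4 : X.ρ (((v, z) : V × F)⁻¹) (X.ρ ((v, z) : V × F) w) = w := by
      rw [← Module.End.mul_apply, ← map_mul, inv_mul_cancel, map_one, Module.End.one_apply]
    rw [h4] at h3
    exact h3.symm
  have key' : ∀ (v : V) (z : F) (w : P.carrier),
      T (P.π (v, z) w) = P.π (g.symm v, z) (T w) := by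
    intro v z w
    have := key (g.symm v) z w
    rwa [LinearEquiv.apply_symm_apply] at this
  -- `T` is bijective by irreducibility
  have hkerinv : ∀ h : V × F, ∀ w ∈ LinearMap.ker T, P.π h w ∈ LinearMap.ker T := by
    intro h w hw
    rw [LinearMap.mem_ker] at hw ⊢
    have hk := key' h.1 h.2 w
    rw [hw, map_zero] at hk
    exact hk
  have hker : LinearMap.ker T = ⊥ := by
    rcases P.irred (LinearMap.ker T) hkerinv with h | h
    · exact h
    · exact absurd (LinearMap.ker_eq_top.1 h) hTne
  have hrangeinv : ∀ h : V × F, ∀ w ∈ LinearMap.range T, P.π h w ∈ LinearMap.range T := by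
    intro h w hw
    obtain ⟨w', rfl⟩ := hw
    exact ⟨P.π (g h.1, h.2) w', key h.1 h.2 w'⟩
  have hrange : LinearMap.range T = ⊤ := by
    rcases P.irred (LinearMap.range T) hrangeinv with h | h
    · exact absurd (LinearMap.range_eq_bot.1 h) hTne
    · exact h
  have hbij : Function.Bijective T :=
    ⟨LinearMap.ker_eq_bot.1 hker, LinearMap.range_eq_top.1 hrange⟩
  exact ⟨LinearEquiv.ofBijective T hbij, fun v z w => key v z w⟩
end KRSup
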